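/- Let μ ∈ (0,1), κ ∈ (0, 1−μ), and let K : [0,1]×[0,1] → ℝ be continuous and κ-Hölder in its first variable. Then there exists a constant C > 0 such that for every continuous v : [0,1] → ℝ, the function 𝒦₁v is κ-Hölder continuous on [0,1] and ‖𝒦₁v‖_{0,κ} ≤ C · max_{θ∈[0,1]} |v(θ)|. -/

import Mathlib

open MeasureTheory Set

lemma K1aux_integral (μ : ℝ) (hμ : μ < 1) (t a b : ℝ) :
    ∫ s in a..b, (t - s) ^ (-μ) = ((t - a) ^ (1 - μ) - (t - b) ^ (1 - μ)) / (1 - μ) := by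
  have h : (-1:ℝ) < -μ := by linarith
  rw [intervalIntegral.integral_comp_sub_left (fun x : ℝ => x ^ (-μ)) t,
    integral_rpow (Or.inl h)]
  rw [show -μ + 1 = 1 - μ by ring]

lemma K1aux_intable (μ : ℝ) (hμ : μ < 1) (t : ℝ) :
    IntervalIntegrable (fun s => (t - s) ^ (-μ)) volume 0 t := by
  have h : (-1:ℝ) < -μ := by linarith
  have := ((intervalIntegral.intervalIntegrable_rpow' (a := 0) (b := t) h).comp_sub_left t).symm
  simpa using this

lemma K1aux_intable_mul (μ : ℝ) (hμ : μ < 1) (t : ℝ) (ht : 0 ≤ t) (g : ℝ → ℝ)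
    (hg : ContinuousOn g (Icc 0 t)) :
    IntervalIntegrable (fun s => (t - s) ^ (-μ) * g s) volume 0 t :=
  (K1aux_intable μ hμ t).mul_continuousOn (by rwa [uIcc_of_le ht])


/-- The weakly singular Volterra integral operator
`(𝒦₁v)(t) = ∫₀^t (t-s)^{-μ} K(t,s) v(s) ds`. -/
noncomputable def K1op (μ : ℝ) (K : ℝ → ℝ → ℝ) (v : ℝ → ℝ) (t : ℝ) : ℝ :=
  ∫ s in (0:ℝ)..t, (t - s) ^ (-μ) * K t s * v s

/-- For `μ ∈ (0,1)`, `κ ∈ (0,1-μ)` and `K` continuous and `κ`-Hölder in its first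
variable, there is `C > 0` such that for every continuous `v` on `[0,1]`, `𝒦₁v`
is `κ`-Hölder continuous on `[0,1]` and its Hölder norm
`‖𝒦₁v‖_{0,κ} = max |𝒦₁v| + sup_{θ≠η} |𝒦₁v(θ)-𝒦₁v(η)|/|θ-η|^κ` is bounded
by `C · max |v|`. -/
theorem K1_maps_C_to_Holder (μ κ : ℝ) (hμ : μ ∈ Ioo (0:ℝ) 1)
    (hκ : κ ∈ Ioo (0:ℝ) (1 - μ)) (K : ℝ → ℝ → ℝ)
    (hKcont : ContinuousOn (fun p : ℝ × ℝ => K p.1 p.2) (Icc 0 1 ×ˢ Icc 0 1))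
    (Lip : ℝ) (hLip : 0 ≤ Lip)
    (hKH : ∀ θ₁ ∈ Icc (0:ℝ) 1, ∀ θ₂ ∈ Icc (0:ℝ) 1, ∀ s ∈ Icc (0:ℝ) 1,
      |K θ₁ s - K θ₂ s| ≤ Lip * |θ₁ - θ₂| ^ κ) :
    ∃ C > (0:ℝ), ∀ v : ℝ → ℝ, ContinuousOn v (Icc (0:ℝ) 1) →
      (∃ H : ℝ, 0 ≤ H ∧ ∀ θ₁ ∈ Icc (0:ℝ) 1, ∀ θ₂ ∈ Icc (0:ℝ) 1,
        |K1op μ K v θ₁ - K1op μ K v θ₂| ≤ H * |θ₁ - θ₂| ^ κ) ∧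
      sSup ((fun θ => |K1op μ K v θ|) '' Icc (0:ℝ) 1)
        + sSup {q : ℝ | ∃ θ ∈ Icc (0:ℝ) 1, ∃ η ∈ Icc (0:ℝ) 1, θ ≠ η ∧
            q = |K1op μ K v θ - K1op μ K v η| / |θ - η| ^ κ}
        ≤ C * sSup ((fun θ => |v θ|) '' Icc (0:ℝ) 1) := by
  obtain ⟨hμ0, hμ1⟩ := hμ
  obtain ⟨hκ0, hκ1⟩ := hκ
  have h1μ : (0:ℝ) < 1 - μ := by linarith
  obtain ⟨M, hM⟩ := (isCompact_Icc.prod isCompact_Icc).exists_bound_of_continuousOn hKcont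
  have hM' : ∀ t ∈ Icc (0:ℝ) 1, ∀ s ∈ Icc (0:ℝ) 1, |K t s| ≤ M := by
    intro t ht s hs
    simpa [Real.norm_eq_abs] using hM (t, s) ⟨ht, hs⟩
  have hM0 : 0 ≤ M :=
    le_trans (abs_nonneg _) (hM' 0 (by norm_num) 0 (by norm_num))
  refine ⟨(Lip + 3 * M + 1) / (1 - μ), div_pos (by linarith) h1μ, fun v hv => ?_⟩
  set Mv := sSup ((fun θ => |v θ|) '' Icc (0:ℝ) 1) with hMvdef
  have hbdd : BddAbove ((fun θ => |v θ|) '' Icc (0:ℝ) 1) :=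
    isCompact_Icc.bddAbove_image hv.abs
  have hMv : ∀ s ∈ Icc (0:ℝ) 1, |v s| ≤ Mv := fun s hs => le_csSup hbdd ⟨s, hs, rfl⟩
  have hMv0 : 0 ≤ Mv := le_trans (abs_nonneg _) (hMv 0 (by norm_num))
  -- continuity of the kernel slices
  have hgcont : ∀ t ∈ Icc (0:ℝ) 1, ContinuousOn (fun s => K t s * v s) (Icc 0 t) := by
    intro t ht
    have h0 : ContinuousOn (fun s : ℝ => ((t, s) : ℝ × ℝ)) (Icc 0 t) :=
      (continuous_const.prodMk continuous_id).continuousOn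
    have h1 : ContinuousOn (fun s : ℝ => K t s) (Icc 0 t) :=
      hKcont.comp h0 (fun s hs => ⟨ht, hs.1, hs.2.trans ht.2⟩)
    exact h1.mul (hv.mono (Icc_subset_Icc le_rfl ht.2))
  have hint : ∀ t ∈ Icc (0:ℝ) 1,
      IntervalIntegrable (fun s => (t - s) ^ (-μ) * K t s * v s) volume 0 t := by
    intro t ht
    have := K1aux_intable_mul μ hμ1 t ht.1 _ (hgcont t ht)
    simpa [mul_assoc] using this
  -- uniform bound on |K1op v|
  have hbnd : ∀ t ∈ Icc (0:ℝ) 1, |K1op μ K v t| ≤ M * Mv / (1 - μ) := by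
    intro t ht
    have hI := hint t ht
    have hIr : IntervalIntegrable (fun s => M * Mv * (t - s) ^ (-μ)) volume 0 t :=
      (K1aux_intable μ hμ1 t).const_mul _
    have h1 : |K1op μ K v t| ≤ ∫ s in (0:ℝ)..t, |(t - s) ^ (-μ) * K t s * v s| :=
      intervalIntegral.abs_integral_le_integral_abs ht.1
    have h2 : (∫ s in (0:ℝ)..t, |(t - s) ^ (-μ) * K t s * v s|)
        ≤ ∫ s in (0:ℝ)..t, M * Mv * (t - s) ^ (-μ) := by
      apply intervalIntegral.integral_mono_on ht.1 hI.abs hIr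
      intro s hs
      have hts : 0 ≤ t - s := by linarith [hs.2]
      have hrp : 0 ≤ (t - s) ^ (-μ) := Real.rpow_nonneg hts _
      have hsI : s ∈ Icc (0:ℝ) 1 := ⟨hs.1, le_trans hs.2 ht.2⟩
      calc |(t - s) ^ (-μ) * K t s * v s| = (t - s) ^ (-μ) * (|K t s| * |v s|) := by
            rw [abs_mul, abs_mul, abs_of_nonneg hrp, mul_assoc]
        _ ≤ (t - s) ^ (-μ) * (M * Mv) := by
            apply mul_le_mul_of_nonneg_left _ hrp
            exact mul_le_mul (hM' t ht s hsI) (hMv s hsI) (abs_nonneg _) hM0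
        _ = M * Mv * (t - s) ^ (-μ) := by ring
    have h3 : (∫ s in (0:ℝ)..t, M * Mv * (t - s) ^ (-μ)) = M * Mv * (t ^ (1 - μ) / (1 - μ)) := by
      rw [intervalIntegral.integral_const_mul, K1aux_integral μ hμ1 t 0 t]
      simp [Real.zero_rpow (ne_of_gt h1μ)]
    have h4 : M * Mv * (t ^ (1 - μ) / (1 - μ)) ≤ M * Mv / (1 - μ) := by
      rw [mul_div_assoc']
      apply div_le_div_of_nonneg_right ?_ h1μ.le
      nlinarith [Real.rpow_le_one ht.1 ht.2 h1μ.le, mul_nonneg hM0 hMv0,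
        Real.rpow_nonneg ht.1 (1 - μ)]
    linarith
  -- key Hölder estimate
  have key : ∀ η θ, η ∈ Icc (0:ℝ) 1 → θ ∈ Icc (0:ℝ) 1 → η ≤ θ →
      |K1op μ K v θ - K1op μ K v η| ≤ ((Lip + 2 * M) * Mv / (1 - μ)) * (θ - η) ^ κ := by
    intro η θ hη hθ hle
    rcases eq_or_lt_of_le hle with heq | hlt
    · subst heq
      simp [sub_self, Real.zero_rpow (ne_of_gt hκ0)]
    have hδ0 : 0 < θ - η := sub_pos.mpr hlt
    have hδ1 : θ - η ≤ 1 := by linarith [hη.1, hθ.2]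
    have hpκ : 0 ≤ (θ - η) ^ κ := Real.rpow_nonneg hδ0.le _
    have hIθ := hint θ hθ
    have hIη := hint η hη
    have hIθ1 : IntervalIntegrable (fun s => (θ - s) ^ (-μ) * K θ s * v s) volume 0 η :=
      hIθ.mono_set (by rw [uIcc_of_le hη.1, uIcc_of_le hθ.1]; exact Icc_subset_Icc le_rfl hle)
    have hIθ2 : IntervalIntegrable (fun s => (θ - s) ^ (-μ) * K θ s * v s) volume η θ :=
      hIθ.mono_set (by rw [uIcc_of_le hle, uIcc_of_le hθ.1]; exact Icc_subset_Icc hη.1 le_rfl)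
    have hsplit : K1op μ K v θ - K1op μ K v η
        = (∫ s in (0:ℝ)..η,
            ((θ - s) ^ (-μ) * K θ s * v s - (η - s) ^ (-μ) * K η s * v s))
          + ∫ s in η..θ, (θ - s) ^ (-μ) * K θ s * v s := by
      have h1 : (∫ s in (0:ℝ)..θ, (θ - s) ^ (-μ) * K θ s * v s)
          = (∫ s in (0:ℝ)..η, (θ - s) ^ (-μ) * K θ s * v s)
            + ∫ s in η..θ, (θ - s) ^ (-μ) * K θ s * v s :=
        (intervalIntegral.integral_add_adjacent_intervals hIθ1 hIθ2).symm
      simp only [K1op]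
      rw [h1, intervalIntegral.integral_sub hIθ1 hIη]
      ring
    -- integrability of the comparison function on [0, η]
    have hA : IntervalIntegrable (fun s => (θ - s) ^ (-μ)) volume 0 η :=
      (K1aux_intable μ hμ1 θ).mono_set
        (by rw [uIcc_of_le hη.1, uIcc_of_le hθ.1]; exact Icc_subset_Icc le_rfl hle)
    have hB : IntervalIntegrable (fun s => (η - s) ^ (-μ)) volume 0 η := K1aux_intable μ hμ1 η
    have hgint : IntervalIntegrable (fun s =>
        Lip * (θ - η) ^ κ * Mv * (θ - s) ^ (-μ)
          + M * Mv * ((η - s) ^ (-μ) - (θ - s) ^ (-μ))) volume 0 η :=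
      (hA.const_mul _).add ((hB.sub hA).const_mul _)
    -- a.e. pointwise bound on [0, η]
    have hae : ∀ᵐ s ∂(volume.restrict (Icc (0:ℝ) η)),
        |(θ - s) ^ (-μ) * K θ s * v s - (η - s) ^ (-μ) * K η s * v s|
          ≤ Lip * (θ - η) ^ κ * Mv * (θ - s) ^ (-μ)
            + M * Mv * ((η - s) ^ (-μ) - (θ - s) ^ (-μ)) := by
      have h1 : ∀ᵐ s ∂(volume.restrict (Icc (0:ℝ) η)), s ∈ Icc (0:ℝ) η :=
        ae_restrict_mem measurableSet_Icc
      have h2' : ∀ᵐ s ∂(volume : Measure ℝ), s ≠ η := by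
        rw [ae_iff]
        have he : {s : ℝ | ¬s ≠ η} = {η} := by ext x; simp
        rw [he]
        exact measure_singleton η
      have h2 : ∀ᵐ s ∂(volume.restrict (Icc (0:ℝ) η)), s ≠ η := ae_restrict_of_ae h2'
      filter_upwards [h1, h2] with s hs hsne
      have hsη : s < η := lt_of_le_of_ne hs.2 hsne
      have hs1 : s ∈ Icc (0:ℝ) 1 := ⟨hs.1, le_trans hs.2 (le_trans hle hθ.2)⟩
      have hηs : 0 < η - s := by linarith
      have hθs : 0 < θ - s := by linarith
      have hrθ : 0 ≤ (θ - s) ^ (-μ) := Real.rpow_nonneg hθs.le _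
      have hmono : (θ - s) ^ (-μ) ≤ (η - s) ^ (-μ) :=
        Real.rpow_le_rpow_of_nonpos hηs (by linarith) (by linarith)
      have hdec : (θ - s) ^ (-μ) * K θ s * v s - (η - s) ^ (-μ) * K η s * v s
          = (θ - s) ^ (-μ) * ((K θ s - K η s) * v s)
            + ((θ - s) ^ (-μ) - (η - s) ^ (-μ)) * (K η s * v s) := by ring
      have hKd : |K θ s - K η s| ≤ Lip * (θ - η) ^ κ := by
        have := hKH θ hθ η hη s hs1
        rwa [abs_of_pos hδ0] at this
      calc |(θ - s) ^ (-μ) * K θ s * v s - (η - s) ^ (-μ) * K η s * v s|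
          ≤ |(θ - s) ^ (-μ) * ((K θ s - K η s) * v s)|
            + |((θ - s) ^ (-μ) - (η - s) ^ (-μ)) * (K η s * v s)| := by
            rw [hdec]; exact abs_add_le _ _
        _ ≤ (θ - s) ^ (-μ) * (Lip * (θ - η) ^ κ * Mv)
            + ((η - s) ^ (-μ) - (θ - s) ^ (-μ)) * (M * Mv) := by
            apply add_le_add
            · rw [abs_mul, abs_of_nonneg hrθ, abs_mul]
              apply mul_le_mul_of_nonneg_left _ hrθ
              exact mul_le_mul hKd (hMv s hs1) (abs_nonneg _) (by positivity)
            · rw [abs_mul, abs_sub_comm, abs_of_nonneg (sub_nonneg.mpr hmono), abs_mul]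
              apply mul_le_mul_of_nonneg_left _ (sub_nonneg.mpr hmono)
              exact mul_le_mul (hM' η hη s hs1) (hMv s hs1) (abs_nonneg _) hM0
        _ = Lip * (θ - η) ^ κ * Mv * (θ - s) ^ (-μ)
            + M * Mv * ((η - s) ^ (-μ) - (θ - s) ^ (-μ)) := by ring
    -- bound on the first piece
    have hT1 : |∫ s in (0:ℝ)..η,
          ((θ - s) ^ (-μ) * K θ s * v s - (η - s) ^ (-μ) * K η s * v s)|
        ≤ Lip * (θ - η) ^ κ * Mv * ((θ ^ (1 - μ) - (θ - η) ^ (1 - μ)) / (1 - μ))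
          + M * Mv * ((η ^ (1 - μ) - (θ ^ (1 - μ) - (θ - η) ^ (1 - μ))) / (1 - μ)) := by
      have e1 : |∫ s in (0:ℝ)..η,
            ((θ - s) ^ (-μ) * K θ s * v s - (η - s) ^ (-μ) * K η s * v s)|
          ≤ ∫ s in (0:ℝ)..η,
              |(θ - s) ^ (-μ) * K θ s * v s - (η - s) ^ (-μ) * K η s * v s| :=
        intervalIntegral.abs_integral_le_integral_abs hη.1
      have e2 : (∫ s in (0:ℝ)..η,
            |(θ - s) ^ (-μ) * K θ s * v s - (η - s) ^ (-μ) * K η s * v s|)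
          ≤ ∫ s in (0:ℝ)..η,
              (Lip * (θ - η) ^ κ * Mv * (θ - s) ^ (-μ)
                + M * Mv * ((η - s) ^ (-μ) - (θ - s) ^ (-μ))) :=
        intervalIntegral.integral_mono_ae_restrict hη.1 (hIθ1.sub hIη).abs hgint hae
      have e3 : (∫ s in (0:ℝ)..η,
            (Lip * (θ - η) ^ κ * Mv * (θ - s) ^ (-μ)
              + M * Mv * ((η - s) ^ (-μ) - (θ - s) ^ (-μ))))
          = Lip * (θ - η) ^ κ * Mv * ((θ ^ (1 - μ) - (θ - η) ^ (1 - μ)) / (1 - μ))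
            + M * Mv * ((η ^ (1 - μ) - (θ ^ (1 - μ) - (θ - η) ^ (1 - μ))) / (1 - μ)) := by
        rw [intervalIntegral.integral_add (hA.const_mul _) ((hB.sub hA).const_mul _),
          intervalIntegral.integral_const_mul, intervalIntegral.integral_const_mul,
          intervalIntegral.integral_sub hB hA,
          K1aux_integral μ hμ1 θ 0 η, K1aux_integral μ hμ1 η 0 η]
        rw [sub_zero, sub_zero, sub_self, Real.zero_rpow (ne_of_gt h1μ)]
        ring
      linarith
    -- bound on the tail piece
    have hT2 : |∫ s in η..θ, (θ - s) ^ (-μ) * K θ s * v s|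
        ≤ M * Mv * ((θ - η) ^ (1 - μ) / (1 - μ)) := by
      have hIr : IntervalIntegrable (fun s => M * Mv * (θ - s) ^ (-μ)) volume η θ :=
        ((K1aux_intable μ hμ1 θ).mono_set
          (by rw [uIcc_of_le hle, uIcc_of_le hθ.1]; exact Icc_subset_Icc hη.1 le_rfl)).const_mul _
      have e1 : |∫ s in η..θ, (θ - s) ^ (-μ) * K θ s * v s|
          ≤ ∫ s in η..θ, |(θ - s) ^ (-μ) * K θ s * v s| :=
        intervalIntegral.abs_integral_le_integral_abs hle
      have e2 : (∫ s in η..θ, |(θ - s) ^ (-μ) * K θ s * v s|)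
          ≤ ∫ s in η..θ, M * Mv * (θ - s) ^ (-μ) := by
        apply intervalIntegral.integral_mono_on hle hIθ2.abs hIr
        intro s hs
        have hts : 0 ≤ θ - s := by linarith [hs.2]
        have hrp : 0 ≤ (θ - s) ^ (-μ) := Real.rpow_nonneg hts _
        have hsI : s ∈ Icc (0:ℝ) 1 := ⟨le_trans hη.1 hs.1, le_trans hs.2 hθ.2⟩
        calc |(θ - s) ^ (-μ) * K θ s * v s| = (θ - s) ^ (-μ) * (|K θ s| * |v s|) := by
              rw [abs_mul, abs_mul, abs_of_nonneg hrp, mul_assoc]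
          _ ≤ (θ - s) ^ (-μ) * (M * Mv) := by
              apply mul_le_mul_of_nonneg_left _ hrp
              exact mul_le_mul (hM' θ hθ s hsI) (hMv s hsI) (abs_nonneg _) hM0
          _ = M * Mv * (θ - s) ^ (-μ) := by ring
      have e3 : (∫ s in η..θ, M * Mv * (θ - s) ^ (-μ))
          = M * Mv * ((θ - η) ^ (1 - μ) / (1 - μ)) := by
        rw [intervalIntegral.integral_const_mul, K1aux_integral μ hμ1 θ η θ]
        rw [sub_self, Real.zero_rpow (ne_of_gt h1μ), sub_zero]
      linarith
    -- combine
    have hpow1 : (θ - η) ^ (1 - μ) ≤ (θ - η) ^ κ :=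
      Real.rpow_le_rpow_of_exponent_ge' hδ0.le hδ1 hκ0.le (by linarith)
    have hpow2 : η ^ (1 - μ) ≤ θ ^ (1 - μ) := Real.rpow_le_rpow hη.1 hle h1μ.le
    have hpow3 : θ ^ (1 - μ) ≤ 1 := Real.rpow_le_one hθ.1 hθ.2 h1μ.le
    have hpow0 : 0 ≤ (θ - η) ^ (1 - μ) := Real.rpow_nonneg hδ0.le _
    have hpow4 : (θ - η) ^ (1 - μ) ≤ θ ^ (1 - μ) := Real.rpow_le_rpow hδ0.le (by linarith [hη.1]) h1μ.le
    have hnum : Lip * (θ - η) ^ κ * Mv * (θ ^ (1 - μ) - (θ - η) ^ (1 - μ))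
        + M * Mv * (η ^ (1 - μ) - (θ ^ (1 - μ) - (θ - η) ^ (1 - μ)))
        + M * Mv * (θ - η) ^ (1 - μ)
        ≤ (Lip + 2 * M) * Mv * (θ - η) ^ κ := by
      have t1 : Lip * (θ - η) ^ κ * Mv * (θ ^ (1 - μ) - (θ - η) ^ (1 - μ))
          ≤ Lip * (θ - η) ^ κ * Mv * 1 :=
        mul_le_mul_of_nonneg_left (by linarith) (by positivity)
      have t2 : M * Mv * (η ^ (1 - μ) - (θ ^ (1 - μ) - (θ - η) ^ (1 - μ)))
          ≤ M * Mv * (θ - η) ^ κ :=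
        mul_le_mul_of_nonneg_left (by linarith) (by positivity)
      have t3 : M * Mv * (θ - η) ^ (1 - μ) ≤ M * Mv * (θ - η) ^ κ :=
        mul_le_mul_of_nonneg_left (by linarith) (by positivity)
      nlinarith [t1, t2, t3]
    calc |K1op μ K v θ - K1op μ K v η|
        ≤ |∫ s in (0:ℝ)..η,
              ((θ - s) ^ (-μ) * K θ s * v s - (η - s) ^ (-μ) * K η s * v s)|
          + |∫ s in η..θ, (θ - s) ^ (-μ) * K θ s * v s| := by
          rw [hsplit]; exact abs_add_le _ _
      _ ≤ (Lip * (θ - η) ^ κ * Mv * (θ ^ (1 - μ) - (θ - η) ^ (1 - μ))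
            + M * Mv * (η ^ (1 - μ) - (θ ^ (1 - μ) - (θ - η) ^ (1 - μ)))
            + M * Mv * (θ - η) ^ (1 - μ)) / (1 - μ) := by
          have := add_le_add hT1 hT2
          calc _ ≤ Lip * (θ - η) ^ κ * Mv * ((θ ^ (1 - μ) - (θ - η) ^ (1 - μ)) / (1 - μ))
              + M * Mv * ((η ^ (1 - μ) - (θ ^ (1 - μ) - (θ - η) ^ (1 - μ))) / (1 - μ))
              + M * Mv * ((θ - η) ^ (1 - μ) / (1 - μ)) := by linarith
            _ = _ := by ring
      _ ≤ ((Lip + 2 * M) * Mv * (θ - η) ^ κ) / (1 - μ) := by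
          apply div_le_div_of_nonneg_right hnum h1μ.le
      _ = ((Lip + 2 * M) * Mv / (1 - μ)) * (θ - η) ^ κ := by ring
  -- the Hölder property in both orders
  have hHold : ∀ θ₁ ∈ Icc (0:ℝ) 1, ∀ θ₂ ∈ Icc (0:ℝ) 1,
      |K1op μ K v θ₁ - K1op μ K v θ₂|
        ≤ ((Lip + 2 * M) * Mv / (1 - μ)) * |θ₁ - θ₂| ^ κ := by
    intro θ₁ h1 θ₂ h2
    rcases le_total θ₂ θ₁ with h | h
    · rw [abs_of_nonneg (sub_nonneg.mpr h)]
      exact key θ₂ θ₁ h2 h1 h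
    · rw [abs_sub_comm (K1op μ K v θ₁), abs_sub_comm θ₁ θ₂,
        abs_of_nonneg (sub_nonneg.mpr h)]
      exact key θ₁ θ₂ h1 h2 h
  have hH0 : 0 ≤ (Lip + 2 * M) * Mv / (1 - μ) :=
    div_nonneg (mul_nonneg (by linarith) hMv0) h1μ.le
  refine ⟨⟨(Lip + 2 * M) * Mv / (1 - μ), hH0, hHold⟩, ?_⟩
  have hsup1 : sSup ((fun θ => |K1op μ K v θ|) '' Icc (0:ℝ) 1) ≤ M * Mv / (1 - μ) := by
    apply csSup_le ((nonempty_Icc.mpr zero_le_one).image _)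
    rintro x ⟨t, ht, rfl⟩
    exact hbnd t ht
  have hsup2 : sSup {q : ℝ | ∃ θ ∈ Icc (0:ℝ) 1, ∃ η ∈ Icc (0:ℝ) 1, θ ≠ η ∧
      q = |K1op μ K v θ - K1op μ K v η| / |θ - η| ^ κ}
      ≤ (Lip + 2 * M) * Mv / (1 - μ) := by
    apply csSup_le
    · exact ⟨_, 0, ⟨le_rfl, zero_le_one⟩, 1, ⟨zero_le_one, le_rfl⟩, by norm_num, rfl⟩
    rintro q ⟨θ, hθq, η, hηq, hne, rfl⟩
    have habs : 0 < |θ - η| ^ κ :=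
      Real.rpow_pos_of_pos (abs_pos.mpr (sub_ne_zero.mpr hne)) _
    rw [div_le_iff₀ habs]
    exact hHold θ hθq η hηq
  have hfin : M * Mv / (1 - μ) + (Lip + 2 * M) * Mv / (1 - μ)
      ≤ (Lip + 3 * M + 1) / (1 - μ) * Mv := by
    rw [div_mul_eq_mul_div]
    rw [← add_div]
    apply div_le_div_of_nonneg_right ?_ h1μ.le
    nlinarith [hMv0]
  linarith
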